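/- Define the Seurat game for sets G_n(T,T') as follows: it lasts n rounds; in round i, ∀ chooses a subset of T or of T' and ∃ chooses a subset of the other set; the final position p_n is the resulting sequence of n pairs of subsets; ∃ wins iff for no i ≤ n and palette π ⊆ {0,...,n-1} do we have |π_T^{p_i}| ≠ |π_{T'}^{p_i}| with min(|π_T^{p_i}|, |π_{T'}^{p_i}|) < 2. Theorem: if T and T' are finite sets each of cardinality at least 2^{n+1}, then ∃ has a winning strategy in G_n(T,T'). -/

import Mathlib

/-- Palette class determined by a position (a list of pairs of subsets): on the
`T` side, the elements of `T` whose membership pattern in the first components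
agrees with the palette `π`. -/
def paletteClassL {T T' : Type*} (p : List (Set T × Set T')) (π : Set ℕ) : Set T :=
  {x | ∀ j : Fin p.length, (x ∈ (p.get j).1 ↔ (j : ℕ) ∈ π)}

def paletteClassR {T T' : Type*} (p : List (Set T × Set T')) (π : Set ℕ) : Set T' :=
  {x | ∀ j : Fin p.length, (x ∈ (p.get j).2 ↔ (j : ℕ) ∈ π)}

open Set

section SeuratAux
variable {T T' : Type*}

noncomputable def seuratPick {α : Type*} (C : Set α) (t : ℕ) : Set α :=
  if h : t ≤ C.ncard then (Set.exists_subset_card_eq h).choose else C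

lemma seuratPick_subset {α : Type*} (C : Set α) (t : ℕ) : seuratPick C t ⊆ C := by
  unfold seuratPick
  split_ifs with h
  · exact (Set.exists_subset_card_eq h).choose_spec.1
  · exact subset_rfl

lemma seuratPick_card {α : Type*} {C : Set α} {t : ℕ} (h : t ≤ C.ncard) :
    (seuratPick C t).ncard = t := by
  unfold seuratPick
  rw [dif_pos h]
  exact (Set.exists_subset_card_eq h).choose_spec.2

def seuratTarget (m a1 a2 b : ℕ) : ℕ :=
  if a1 < m then a1 else if a2 < m then b - a2 else m

lemma seuratTarget_spec {m a1 a2 b : ℕ} (hm : 1 ≤ m)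
    (h : a1 + a2 = b ∨ (2 * m ≤ a1 + a2 ∧ 2 * m ≤ b)) :
    seuratTarget m a1 a2 b ≤ b ∧
    (a1 = seuratTarget m a1 a2 b ∨ (m ≤ a1 ∧ m ≤ seuratTarget m a1 a2 b)) ∧
    (a2 = b - seuratTarget m a1 a2 b ∨ (m ≤ a2 ∧ m ≤ b - seuratTarget m a1 a2 b)) := by
  unfold seuratTarget
  split_ifs <;> omega

lemma paletteClass_congr (p : List (Set T × Set T')) {π ρ : Set ℕ}
    (h : ∀ j : Fin p.length, ((j : ℕ) ∈ π ↔ (j : ℕ) ∈ ρ)) :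
    paletteClassL p π = paletteClassL p ρ ∧ paletteClassR p π = paletteClassR p ρ := by
  constructor <;> ext x <;> simp only [paletteClassL, paletteClassR, mem_setOf_eq] <;>
    exact ⟨fun H j => (H j).trans (h j), fun H j => (H j).trans (h j).symm⟩

lemma classL_append_mem (p : List (Set T × Set T')) (x : Set T × Set T') {π : Set ℕ}
    (hmem : p.length ∈ π) :
    paletteClassL (p ++ [x]) π = paletteClassL p π ∩ x.1 := by
  ext y
  simp only [paletteClassL, mem_setOf_eq, mem_inter_iff]
  constructor
  · intro H
    refine ⟨fun j => ?_, ?_⟩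
    · have hj : (j : ℕ) < (p ++ [x]).length := by simp
      have := H ⟨j, hj⟩
      simpa [List.get_eq_getElem, List.getElem_append_left j.2] using this
    · have hl : p.length < (p ++ [x]).length := by simp
      have := H ⟨p.length, hl⟩
      simp only [List.get_eq_getElem, List.getElem_concat_length] at this
      exact this.mpr hmem
  · rintro ⟨H1, H2⟩ j
    rcases lt_or_eq_of_le (Nat.lt_succ_iff.mp (by simpa using j.2)) with hlt | heq
    · have := H1 ⟨j, hlt⟩
      simpa [List.get_eq_getElem, List.getElem_append_left hlt] using this
    · have hx : (p ++ [x]).get j = x := by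
        simp only [List.get_eq_getElem, heq]
        exact List.getElem_concat_length (h := rfl) ..
      rw [hx, heq]
      exact ⟨fun _ => hmem, fun _ => H2⟩

lemma classL_append_not_mem (p : List (Set T × Set T')) (x : Set T × Set T') {π : Set ℕ}
    (hmem : p.length ∉ π) :
    paletteClassL (p ++ [x]) π = paletteClassL p π \ x.1 := by
  ext y
  simp only [paletteClassL, mem_setOf_eq, mem_diff]
  constructor
  · intro H
    refine ⟨fun j => ?_, ?_⟩
    · have hj : (j : ℕ) < (p ++ [x]).length := by simp
      have := H ⟨j, hj⟩
      simpa [List.get_eq_getElem, List.getElem_append_left j.2] using this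
    · have hl : p.length < (p ++ [x]).length := by simp
      have := H ⟨p.length, hl⟩
      simp only [List.get_eq_getElem, List.getElem_concat_length] at this
      exact fun hy => hmem (this.mp hy)
  · rintro ⟨H1, H2⟩ j
    rcases lt_or_eq_of_le (Nat.lt_succ_iff.mp (by simpa using j.2)) with hlt | heq
    · have := H1 ⟨j, hlt⟩
      simpa [List.get_eq_getElem, List.getElem_append_left hlt] using this
    · have hx : (p ++ [x]).get j = x := by
        simp only [List.get_eq_getElem, heq]
        exact List.getElem_concat_length (h := rfl) ..
      rw [hx, heq]
      exact ⟨fun hy => absurd hy H2, fun hy => absurd hy hmem⟩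

lemma classR_append_mem (p : List (Set T × Set T')) (x : Set T × Set T') {π : Set ℕ}
    (hmem : p.length ∈ π) :
    paletteClassR (p ++ [x]) π = paletteClassR p π ∩ x.2 := by
  ext y
  simp only [paletteClassR, mem_setOf_eq, mem_inter_iff]
  constructor
  · intro H
    refine ⟨fun j => ?_, ?_⟩
    · have hj : (j : ℕ) < (p ++ [x]).length := by simp
      have := H ⟨j, hj⟩
      simpa [List.get_eq_getElem, List.getElem_append_left j.2] using this
    · have hl : p.length < (p ++ [x]).length := by simp
      have := H ⟨p.length, hl⟩
      simp only [List.get_eq_getElem, List.getElem_concat_length] at this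
      exact this.mpr hmem
  · rintro ⟨H1, H2⟩ j
    rcases lt_or_eq_of_le (Nat.lt_succ_iff.mp (by simpa using j.2)) with hlt | heq
    · have := H1 ⟨j, hlt⟩
      simpa [List.get_eq_getElem, List.getElem_append_left hlt] using this
    · have hx : (p ++ [x]).get j = x := by
        simp only [List.get_eq_getElem, heq]
        exact List.getElem_concat_length (h := rfl) ..
      rw [hx, heq]
      exact ⟨fun _ => hmem, fun _ => H2⟩

lemma classR_append_not_mem (p : List (Set T × Set T')) (x : Set T × Set T') {π : Set ℕ}
    (hmem : p.length ∉ π) :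
    paletteClassR (p ++ [x]) π = paletteClassR p π \ x.2 := by
  ext y
  simp only [paletteClassR, mem_setOf_eq, mem_diff]
  constructor
  · intro H
    refine ⟨fun j => ?_, ?_⟩
    · have hj : (j : ℕ) < (p ++ [x]).length := by simp
      have := H ⟨j, hj⟩
      simpa [List.get_eq_getElem, List.getElem_append_left j.2] using this
    · have hl : p.length < (p ++ [x]).length := by simp
      have := H ⟨p.length, hl⟩
      simp only [List.get_eq_getElem, List.getElem_concat_length] at this
      exact fun hy => hmem (this.mp hy)
  · rintro ⟨H1, H2⟩ j
    rcases lt_or_eq_of_le (Nat.lt_succ_iff.mp (by simpa using j.2)) with hlt | heq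
    · have := H1 ⟨j, hlt⟩
      simpa [List.get_eq_getElem, List.getElem_append_left hlt] using this
    · have hx : (p ++ [x]).get j = x := by
        simp only [List.get_eq_getElem, heq]
        exact List.getElem_concat_length (h := rfl) ..
      rw [hx, heq]
      exact ⟨fun hy => absurd hy H2, fun hy => absurd hy hmem⟩

lemma classL_nil (π : Set ℕ) : paletteClassL ([] : List (Set T × Set T')) π = univ := by
  ext x
  simp only [paletteClassL, mem_setOf_eq, mem_univ, iff_true]
  exact fun j => j.elim0

lemma classR_nil (π : Set ℕ) : paletteClassR ([] : List (Set T × Set T')) π = univ := by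
  ext x
  simp only [paletteClassR, mem_setOf_eq, mem_univ, iff_true]
  exact fun j => j.elim0

end SeuratAux
section SeuratStrat
open Set
variable {T T' : Type*}

noncomputable def respR (n : ℕ) (h : List (Set T × Set T')) (A : Set T) : Set T' :=
  ⋃ π : Set ℕ, seuratPick (paletteClassR h π)
    (seuratTarget (2 ^ (n - h.length)) (paletteClassL h π ∩ A).ncard
      (paletteClassL h π \ A).ncard (paletteClassR h π).ncard)

noncomputable def respL (n : ℕ) (h : List (Set T × Set T')) (B : Set T') : Set T :=
  ⋃ π : Set ℕ, seuratPick (paletteClassL h π)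
    (seuratTarget (2 ^ (n - h.length)) (paletteClassR h π ∩ B).ncard
      (paletteClassR h π \ B).ncard (paletteClassL h π).ncard)

lemma respR_inter (n : ℕ) (h : List (Set T × Set T')) (A : Set T) (π : Set ℕ) :
    respR n h A ∩ paletteClassR h π =
      seuratPick (paletteClassR h π)
        (seuratTarget (2 ^ (n - h.length)) (paletteClassL h π ∩ A).ncard
          (paletteClassL h π \ A).ncard (paletteClassR h π).ncard) := by
  apply Subset.antisymm
  · rintro x ⟨hx1, hx2⟩
    rw [respR, mem_iUnion] at hx1
    obtain ⟨ρ, hxS⟩ := hx1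
    have hρ : x ∈ paletteClassR h ρ := seuratPick_subset _ _ hxS
    simp only [paletteClassR, mem_setOf_eq] at hρ hx2
    have htr : ∀ j : Fin h.length, ((j : ℕ) ∈ ρ ↔ (j : ℕ) ∈ π) := fun j =>
      (hρ j).symm.trans (hx2 j)
    obtain ⟨hL, hR⟩ := paletteClass_congr h htr
    rw [hL, hR] at hxS
    exact hxS
  · refine subset_inter ?_ (seuratPick_subset _ _)
    rw [respR]
    exact subset_iUnion_of_subset π subset_rfl

lemma respL_inter (n : ℕ) (h : List (Set T × Set T')) (B : Set T') (π : Set ℕ) :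
    respL n h B ∩ paletteClassL h π =
      seuratPick (paletteClassL h π)
        (seuratTarget (2 ^ (n - h.length)) (paletteClassR h π ∩ B).ncard
          (paletteClassR h π \ B).ncard (paletteClassL h π).ncard) := by
  apply Subset.antisymm
  · rintro x ⟨hx1, hx2⟩
    rw [respL, mem_iUnion] at hx1
    obtain ⟨ρ, hxS⟩ := hx1
    have hρ : x ∈ paletteClassL h ρ := seuratPick_subset _ _ hxS
    simp only [paletteClassL, mem_setOf_eq] at hρ hx2
    have htr : ∀ j : Fin h.length, ((j : ℕ) ∈ ρ ↔ (j : ℕ) ∈ π) := fun j =>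
      (hρ j).symm.trans (hx2 j)
    obtain ⟨hL, hR⟩ := paletteClass_congr h htr
    rw [hL, hR] at hxS
    exact hxS
  · refine subset_inter ?_ (seuratPick_subset _ _)
    rw [respL]
    exact subset_iUnion_of_subset π subset_rfl

def SeuratInv (n : ℕ) (h : List (Set T × Set T')) : Prop :=
  ∀ π : Set ℕ,
    (paletteClassL h π).ncard = (paletteClassR h π).ncard ∨
    (2 ^ (n + 1 - h.length) ≤ (paletteClassL h π).ncard ∧
     2 ^ (n + 1 - h.length) ≤ (paletteClassR h π).ncard)

variable [Finite T] [Finite T']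

lemma seurat_step_inl (n : ℕ) (h : List (Set T × Set T')) (hlen : h.length ≤ n)
    (hInv : SeuratInv n h) (A : Set T) :
    SeuratInv n (h ++ [(A, respR n h A)]) := by
  intro π
  set m := 2 ^ (n - h.length) with hm
  set C := paletteClassL h π with hC
  set C' := paletteClassR h π with hC'
  set a1 := (C ∩ A).ncard with ha1
  set a2 := (C \ A).ncard with ha2
  set b := C'.ncard with hb
  set t := seuratTarget m a1 a2 b with ht
  have hm1 : 1 ≤ m := Nat.one_le_two_pow
  have hsum : a1 + a2 = C.ncard := Set.ncard_inter_add_ncard_diff_eq_ncard C A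
  have hexp : n + 1 - h.length = (n - h.length) + 1 := by omega
  have hhyp : a1 + a2 = b ∨ (2 * m ≤ a1 + a2 ∧ 2 * m ≤ b) := by
    rcases hInv π with heq | ⟨h1, h2⟩
    · left; rw [hsum, ← hC, ← hC'] at *; omega
    · right
      rw [hexp, pow_succ, ← hm] at h1 h2
      rw [← hC] at h1
      rw [← hC'] at h2
      omega
  obtain ⟨htb, hA1, hA2⟩ := seuratTarget_spec hm1 hhyp
  have hkey : respR n h A ∩ C' = seuratPick C' t := respR_inter n h A π
  have hpickcard : (seuratPick C' t).ncard = t := seuratPick_card htb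
  have hRmem : C' ∩ respR n h A = seuratPick C' t := by rw [inter_comm]; exact hkey
  have hRnot : C' \ respR n h A = C' \ seuratPick C' t := by
    rw [← hkey]; ext z; simp only [mem_diff, mem_inter_iff]; tauto
  have hdiffcard : (C' \ seuratPick C' t).ncard = b - t := by
    rw [Set.ncard_diff (seuratPick_subset C' t), hpickcard]
  simp only [List.length_append, List.length_singleton]
  have hexp2 : n + 1 - (h.length + 1) = n - h.length := by omega
  rw [hexp2, ← hm]
  by_cases hmem : h.length ∈ π
  · rw [classL_append_mem _ _ hmem, classR_append_mem _ _ hmem]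
    simp only [inter_comm, ← hC, ← hC']
    rw [show C' ∩ respR n h A = seuratPick C' t from hRmem, hpickcard]
    rcases hA1 with h' | h'
    · left; rw [inter_comm]; exact h'
    · right; rw [inter_comm]; exact h'
  · rw [classL_append_not_mem _ _ hmem, classR_append_not_mem _ _ hmem]
    simp only [← hC, ← hC']
    rw [show C' \ respR n h A = C' \ seuratPick C' t from hRnot, hdiffcard]
    exact hA2

lemma seurat_step_inr (n : ℕ) (h : List (Set T × Set T')) (hlen : h.length ≤ n)
    (hInv : SeuratInv n h) (B : Set T') :
    SeuratInv n (h ++ [(respL n h B, B)]) := by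
  intro π
  set m := 2 ^ (n - h.length) with hm
  set C := paletteClassR h π with hC
  set C' := paletteClassL h π with hC'
  set a1 := (C ∩ B).ncard with ha1
  set a2 := (C \ B).ncard with ha2
  set b := C'.ncard with hb
  set t := seuratTarget m a1 a2 b with ht
  have hm1 : 1 ≤ m := Nat.one_le_two_pow
  have hsum : a1 + a2 = C.ncard := Set.ncard_inter_add_ncard_diff_eq_ncard C B
  have hexp : n + 1 - h.length = (n - h.length) + 1 := by omega
  have hhyp : a1 + a2 = b ∨ (2 * m ≤ a1 + a2 ∧ 2 * m ≤ b) := by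
    rcases hInv π with heq | ⟨h1, h2⟩
    · left; rw [hsum, ← hC, ← hC'] at *; omega
    · right
      rw [hexp, pow_succ, ← hm] at h1 h2
      rw [← hC'] at h1
      rw [← hC] at h2
      omega
  obtain ⟨htb, hA1, hA2⟩ := seuratTarget_spec hm1 hhyp
  have hkey : respL n h B ∩ C' = seuratPick C' t := respL_inter n h B π
  have hpickcard : (seuratPick C' t).ncard = t := seuratPick_card htb
  have hRmem : C' ∩ respL n h B = seuratPick C' t := by rw [inter_comm]; exact hkey
  have hRnot : C' \ respL n h B = C' \ seuratPick C' t := by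
    rw [← hkey]; ext z; simp only [mem_diff, mem_inter_iff]; tauto
  have hdiffcard : (C' \ seuratPick C' t).ncard = b - t := by
    rw [Set.ncard_diff (seuratPick_subset C' t), hpickcard]
  simp only [List.length_append, List.length_singleton]
  have hexp2 : n + 1 - (h.length + 1) = n - h.length := by omega
  rw [hexp2, ← hm]
  by_cases hmem : h.length ∈ π
  · rw [classL_append_mem _ _ hmem, classR_append_mem _ _ hmem]
    simp only [← hC, ← hC']
    rw [show C' ∩ respL n h B = seuratPick C' t from hRmem, hpickcard]
    rcases hA1 with h' | h'
    · left; omega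
    · right; exact ⟨h'.2, h'.1⟩
  · rw [classL_append_not_mem _ _ hmem, classR_append_not_mem _ _ hmem]
    simp only [← hC, ← hC']
    rw [show C' \ respL n h B = C' \ seuratPick C' t from hRnot, hdiffcard]
    rcases hA2 with h' | h'
    · left; omega
    · right; exact ⟨h'.2, h'.1⟩

end SeuratStrat
/-- A position is a loss (for ∃) if some palette class has different
cardinalities on the two sides with one of them of size < 2. -/
def LosingPos {T T' : Type*} (n : ℕ) (p : List (Set T × Set T')) : Prop :=
  ∃ π : Set ℕ, π ⊆ {j | j < n} ∧
    (paletteClassL p π).ncard ≠ (paletteClassR p π).ncard ∧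
    min (paletteClassL p π).ncard (paletteClassR p π).ncard < 2

/-- The play of the Seurat game `G_n(T,T')` determined by ∃'s strategy `σ` and
∀'s strategy `f`: in each round ∀ picks a subset of `T` or of `T'` (given the
history), and `σ` completes it to a pair. -/
def play {T T' : Type*}
    (σ : List (Set T × Set T') → (Set T ⊕ Set T') → Set T × Set T')
    (f : List (Set T × Set T') → Set T ⊕ Set T') :
    ℕ → List (Set T × Set T')
  | 0 => []
  | i + 1 => play σ f i ++ [σ (play σ f i) (f (play σ f i))]

/-- If `T`, `T'` are finite sets with `|T|, |T'| ≥ 2^(n+1)`, then ∃ has a winning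
strategy in the `n`-round Seurat game for sets `G_n(T,T')`: a strategy `σ`
(always answering on the opposite side to ∀'s move) such that against any
∀-strategy no position `p_i`, `i ≤ n`, is a loss. -/
theorem exists_winning_strategy_seurat {T T' : Type*} [Finite T] [Finite T']
    (n : ℕ) (hT : 2 ^ (n + 1) ≤ Nat.card T) (hT' : 2 ^ (n + 1) ≤ Nat.card T') :
    ∃ σ : List (Set T × Set T') → (Set T ⊕ Set T') → Set T × Set T',
      (∀ h A, (σ h (Sum.inl A)).1 = A) ∧
      (∀ h B, (σ h (Sum.inr B)).2 = B) ∧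
      ∀ f : List (Set T × Set T') → Set T ⊕ Set T',
        ∀ i ≤ n, ¬ LosingPos n (play σ f i) := by
  classical
  set σ : List (Set T × Set T') → (Set T ⊕ Set T') → Set T × Set T' :=
    fun h move => Sum.elim (fun A => (A, respR n h A)) (fun B => (respL n h B, B)) move
    with hσ
  refine ⟨σ, fun h A => rfl, fun h B => rfl, ?_⟩
  intro f
  have hlenplay : ∀ i, (play σ f i).length = i := by
    intro i
    induction i with
    | zero => rfl
    | succ i ih => simp [play, ih]
  have hinv : ∀ i ≤ n, SeuratInv n (play σ f i) := by
    intro i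
    induction i with
    | zero =>
      intro _ π
      right
      rw [show play σ f 0 = ([] : List (Set T × Set T')) from rfl, classL_nil, classR_nil,
        Set.ncard_univ, Set.ncard_univ]
      simp only [List.length_nil, Nat.sub_zero]
      exact ⟨hT, hT'⟩
    | succ i ih =>
      intro hi
      have hi' : i ≤ n := by omega
      have hlen : (play σ f i).length ≤ n := by rw [hlenplay]; exact hi'
      have hIi := ih hi'
      show SeuratInv n (play σ f i ++ [σ (play σ f i) (f (play σ f i))])
      cases hfe : f (play σ f i) with
      | inl A =>
        have : σ (play σ f i) (Sum.inl A) = (A, respR n (play σ f i) A) := rfl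
        rw [this]
        exact seurat_step_inl n _ hlen hIi A
      | inr B =>
        have : σ (play σ f i) (Sum.inr B) = (respL n (play σ f i) B, B) := rfl
        rw [this]
        exact seurat_step_inr n _ hlen hIi B
  rintro i hi ⟨π, hπsub, hne, hmin⟩
  rcases hinv i hi π with heq | ⟨h1, h2⟩
  · exact hne heq
  · have h2le : 2 ≤ 2 ^ (n + 1 - (play σ f i).length) := by
      rw [hlenplay]
      calc 2 = 2 ^ 1 := by norm_num
        _ ≤ 2 ^ (n + 1 - i) := Nat.pow_le_pow_right (by norm_num) (by omega)
    have hA := le_trans h2le h1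
    have hB := le_trans h2le h2
    omega
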